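/- If x and y are distinct non-adjacent vertices of a simple graph G, then the local complementations at x and y commute: (G*x)*y = (G*y)*x. -/

import Mathlib

/-- The local complement `G*c` of a simple graph `G` at a vertex `c`: distinct
vertices `u`, `v` are adjacent in `G*c` iff (`u ~ v` in `G`) XOR (`u` and `v` are
both neighbours of `c` in `G`). -/
def localComplement {V : Type*} (G : SimpleGraph V) (c : V) : SimpleGraph V where
  Adj u v := u ≠ v ∧ Xor' (G.Adj u v) (G.Adj c u ∧ G.Adj c v)
  symm := ⟨by
    rintro u v ⟨h, hx⟩
    refine ⟨h.symm, ?_⟩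
    rwa [G.adj_comm v u, and_comm]⟩
  loopless := ⟨fun u h => h.1 rfl⟩

private lemma xor_rot (a b c : Prop) : Xor' (Xor' a b) c ↔ Xor' (Xor' a c) b := by
  unfold Xor'; unfold Xor; tauto

private lemma lc_adj_of_nonadj {V : Type*} (G : SimpleGraph V) {c c' : V} (u : V)
    (h : ¬ G.Adj c c') : (localComplement G c).Adj c' u ↔ G.Adj c' u := by
  constructor
  · rintro ⟨_, ⟨h3, _⟩ | ⟨⟨h4, _⟩, _⟩⟩
    · exact h3
    · exact absurd h4 h
  · intro h3
    exact ⟨G.ne_of_adj h3, Or.inl ⟨h3, fun h4 => h h4.1⟩⟩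

/-- Local complementations at distinct non-adjacent vertices commute. -/
theorem stmt8 {V : Type*} (G : SimpleGraph V) (x y : V) (hxy : x ≠ y)
    (hadj : ¬ G.Adj x y) :
    localComplement (localComplement G x) y = localComplement (localComplement G y) x := by
  have hadj' : ¬ G.Adj y x := fun h => hadj h.symm
  ext u v
  constructor <;> rintro ⟨h, hx⟩ <;> refine ⟨h, ?_⟩
  · rw [lc_adj_of_nonadj G u hadj, lc_adj_of_nonadj G v hadj,
      show (localComplement G x).Adj u v ↔ Xor' (G.Adj u v) (G.Adj x u ∧ G.Adj x v) from
        ⟨And.right, fun p => ⟨h, p⟩⟩] at hx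
    rw [lc_adj_of_nonadj G u hadj', lc_adj_of_nonadj G v hadj',
      show (localComplement G y).Adj u v ↔ Xor' (G.Adj u v) (G.Adj y u ∧ G.Adj y v) from
        ⟨And.right, fun p => ⟨h, p⟩⟩]
    exact (xor_rot _ _ _).mp hx
  · rw [lc_adj_of_nonadj G u hadj', lc_adj_of_nonadj G v hadj',
      show (localComplement G y).Adj u v ↔ Xor' (G.Adj u v) (G.Adj y u ∧ G.Adj y v) from
        ⟨And.right, fun p => ⟨h, p⟩⟩] at hx
    rw [lc_adj_of_nonadj G u hadj, lc_adj_of_nonadj G v hadj,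
      show (localComplement G x).Adj u v ↔ Xor' (G.Adj u v) (G.Adj x u ∧ G.Adj x v) from
        ⟨And.right, fun p => ⟨h, p⟩⟩]
    exact (xor_rot _ _ _).mp hx
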